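/- Let (Ω, μ) be a finite measure space, let m ∈ ℕ, and let D^loc ⊆ ℝ^m be nonempty. Define D := { y ∈ L²(μ; ℝ^m) : y(x) ∈ D^loc for μ-a.e. x ∈ Ω }. Let (D_k^loc)_{k∈ℕ} be a sequence of nonempty subsets of ℝ^m and let (ρ_k)_{k∈ℕ} be a sequence of positive reals with ρ_k → 0 such that sup_{ξ∈D^loc} inf_{η∈D_k^loc} |ξ − η| ≤ ρ_k for all k. Then for every y ∈ D there exists a sequence (y_k)_{k∈ℕ} of simple (finitely-valued measurable) functions y_k ∈ L²(μ; ℝ^m) with y_k(x) ∈ D_k^loc for μ-a.e. x ∈ Ω, such that ‖y_k − y‖_{L²(μ;ℝ^m)} → 0 as k → ∞. -/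

import Mathlib

open Filter Topology MeasureTheory ENNReal

/-- fine approximation of the material data set: if the local data sets
`D_k^loc` approximate the nonempty set `D^loc ⊆ ℝ^m` in the sense that
`sup_{ξ ∈ D^loc} inf_{η ∈ D_k^loc} |ξ - η| ≤ ρ_k` with `ρ_k → 0`, then every
`y ∈ L²(μ; ℝ^m)` with values a.e. in `D^loc` is the `L²`-limit of simple functions
with values a.e. in `D_k^loc`. -/
theorem statement6 {Ω : Type*} [MeasurableSpace Ω] (μ : Measure Ω) [IsFiniteMeasure μ]
    (m : ℕ) (Dloc : Set (EuclideanSpace ℝ (Fin m))) (hDloc : Dloc.Nonempty)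
    (Dkloc : ℕ → Set (EuclideanSpace ℝ (Fin m))) (hDk : ∀ k, (Dkloc k).Nonempty)
    (ρ : ℕ → ℝ) (hρpos : ∀ k, 0 < ρ k) (hρ : Tendsto ρ atTop (𝓝 0))
    (hH : ∀ k, ∀ ξ ∈ Dloc, Metric.infDist ξ (Dkloc k) ≤ ρ k)
    (y : Lp (EuclideanSpace ℝ (Fin m)) 2 μ)
    (hy : ∀ᵐ x ∂μ, y x ∈ Dloc) :
    ∃ (s : ℕ → SimpleFunc Ω (EuclideanSpace ℝ (Fin m)))
      (hs : ∀ k, MemLp (s k) 2 μ),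
      (∀ k, ∀ᵐ x ∂μ, s k x ∈ Dkloc k) ∧
      Tendsto (fun k => ‖(hs k).toLp (s k) - y‖) atTop (𝓝 0) := by
  classical
  obtain ⟨ξ₀, hξ₀⟩ := hDloc
  -- a genuine representative of `y` with values everywhere in `Dloc`
  set t : Set Ω := {x | y x ∉ Dloc} with ht
  have hμt : μ t = 0 := by
    simpa [ht] using (MeasureTheory.ae_iff.mp hy)
  set N : Set Ω := toMeasurable μ t with hN
  have hNmeas : MeasurableSet N := measurableSet_toMeasurable μ t
  have hμN : μ N = 0 := by rw [hN, measure_toMeasurable]; exact hμt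
  set f : Ω → EuclideanSpace ℝ (Fin m) := N.piecewise (fun _ => ξ₀) y with hf
  have hfsm : StronglyMeasurable f :=
    StronglyMeasurable.piecewise hNmeas stronglyMeasurable_const (Lp.stronglyMeasurable y)
  have hfmeas : Measurable f := hfsm.measurable
  have hfDloc : ∀ x, f x ∈ Dloc := by
    intro x
    by_cases hx : x ∈ N
    · simp [hf, Set.piecewise, hx, hξ₀]
    · have hxt : x ∉ t := fun h => hx (subset_toMeasurable μ t h)
      have : y x ∈ Dloc := not_not.mp hxt
      simp [hf, Set.piecewise, hx, this]
  have hfy : f =ᵐ[μ] y := by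
    have : ∀ᵐ x ∂μ, x ∉ N := measure_eq_zero_iff_ae_notMem.mp hμN
    filter_upwards [this] with x hx
    simp [hf, Set.piecewise, hx]
  have hfL2 : MemLp f 2 μ := (Lp.memLp y).ae_eq hfy.symm
  -- approximating simple functions with values in `Dloc`
  set T : ℕ → SimpleFunc Ω (EuclideanSpace ℝ (Fin m)) := fun n => SimpleFunc.approxOn f hfmeas Dloc ξ₀ hξ₀ n with hT
  have hTmem : ∀ n x, T n x ∈ Dloc := fun n x => SimpleFunc.approxOn_mem hfmeas hξ₀ n x
  have hTconv : Tendsto (fun n => eLpNorm (⇑(T n) - f) 2 μ) atTop (𝓝 0) := by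
    refine SimpleFunc.tendsto_approxOn_Lp_eLpNorm hfmeas hξ₀ (by norm_num)
      (Eventually.of_forall fun x => subset_closure (hfDloc x)) ?_
    exact (hfL2.sub (memLp_const ξ₀)).2
  -- projection maps onto `Dkloc k`
  have hproj : ∀ k, ∀ ξ ∈ Dloc, ∃ η ∈ Dkloc k, dist ξ η < 2 * ρ k := by
    intro k ξ hξ
    exact (Metric.infDist_lt_iff (hDk k)).mp
      (lt_of_le_of_lt (hH k ξ hξ) (by have := hρpos k; linarith))
  set π : ℕ → EuclideanSpace ℝ (Fin m) → EuclideanSpace ℝ (Fin m) := fun k ξ =>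
    if h : ξ ∈ Dloc then (hproj k ξ h).choose else (hDk k).some with hπ
  have hπmem : ∀ k ξ, π k ξ ∈ Dkloc k := by
    intro k ξ
    by_cases h : ξ ∈ Dloc
    · simp only [hπ, dif_pos h]
      exact (hproj k ξ h).choose_spec.1
    · simp only [hπ, dif_neg h]
      exact (hDk k).some_mem
  have hπdist : ∀ k, ∀ ξ ∈ Dloc, dist ξ (π k ξ) < 2 * ρ k := by
    intro k ξ h
    simp only [hπ, dif_pos h]
    exact (hproj k ξ h).choose_spec.2
  -- the final simple functions
  set s : ℕ → SimpleFunc Ω (EuclideanSpace ℝ (Fin m)) := fun k => (T k).map (π k) with hs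
  have hscoe : ∀ k x, s k x = π k (T k x) := fun k x => rfl
  have hsmem : ∀ k, ∀ x, s k x ∈ Dkloc k := fun k x => hπmem k (T k x)
  have hsL2 : ∀ k, MemLp (s k) 2 μ := by
    intro k
    obtain ⟨C, hC⟩ := (s k).exists_forall_norm_le
    exact MemLp.of_bound (s k).aestronglyMeasurable C (Eventually.of_forall hC)
  -- the error between `s k` and `T k`
  have hsT : ∀ k, eLpNorm (⇑(s k) - ⇑(T k)) 2 μ ≤
      μ Set.univ ^ (2 : ℝ≥0∞).toReal⁻¹ * ENNReal.ofReal (2 * ρ k) := by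
    intro k
    refine eLpNorm_le_of_ae_bound (Eventually.of_forall fun x => ?_)
    have := hπdist k (T k x) (hTmem k x)
    have h1 : ‖s k x - T k x‖ = dist (T k x) (π k (T k x)) := by
      rw [hscoe, dist_comm, dist_eq_norm]
    simpa [Pi.sub_apply, h1] using this.le
  have hsTconv : Tendsto (fun k => eLpNorm (⇑(s k) - ⇑(T k)) 2 μ) atTop (𝓝 0) := by
    have hbound : Tendsto (fun k => μ Set.univ ^ (2 : ℝ≥0∞).toReal⁻¹ *
        ENNReal.ofReal (2 * ρ k)) atTop (𝓝 0) := by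
      have h1 : Tendsto (fun k => ENNReal.ofReal (2 * ρ k)) atTop (𝓝 0) := by
        have : Tendsto (fun k => 2 * ρ k) atTop (𝓝 (2 * 0)) := hρ.const_mul 2
        rw [mul_zero] at this
        simpa using ENNReal.tendsto_ofReal this
      have h2 : μ Set.univ ^ (2 : ℝ≥0∞).toReal⁻¹ ≠ ∞ :=
        ENNReal.rpow_ne_top_of_nonneg (by norm_num) (measure_ne_top μ _)
      simpa using ENNReal.Tendsto.const_mul h1 (Or.inr h2)
    exact tendsto_of_tendsto_of_tendsto_of_le_of_le tendsto_const_nhds hbound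
      (fun k => zero_le) hsT
  -- convergence of `eLpNorm (s k - y)`
  have hsy : Tendsto (fun k => eLpNorm (⇑(s k) - ⇑y) 2 μ) atTop (𝓝 0) := by
    have key : ∀ k, eLpNorm (⇑(s k) - ⇑y) 2 μ ≤
        eLpNorm (⇑(s k) - ⇑(T k)) 2 μ + eLpNorm (⇑(T k) - f) 2 μ := by
      intro k
      have he : eLpNorm (⇑(s k) - ⇑y) 2 μ = eLpNorm (⇑(s k) - f) 2 μ :=
        eLpNorm_congr_ae (by filter_upwards [hfy] with x hx; simp [hx])
      rw [he]
      have hrw : ⇑(s k) - f = (⇑(s k) - ⇑(T k)) + (⇑(T k) - f) := by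
        funext x; simp
      rw [hrw]
      exact eLpNorm_add_le ((s k).aestronglyMeasurable.sub (T k).aestronglyMeasurable)
        ((T k).aestronglyMeasurable.sub hfL2.aestronglyMeasurable) one_le_two
    have hsum : Tendsto (fun k => eLpNorm (⇑(s k) - ⇑(T k)) 2 μ + eLpNorm (⇑(T k) - f) 2 μ)
        atTop (𝓝 0) := by
      simpa using hsTconv.add hTconv
    exact tendsto_of_tendsto_of_tendsto_of_le_of_le tendsto_const_nhds hsum
      (fun k => zero_le) key
  refine ⟨s, hsL2, fun k => Eventually.of_forall (hsmem k), ?_⟩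
  have hnorm : ∀ k, ‖(hsL2 k).toLp (s k) - y‖ = (eLpNorm (⇑(s k) - ⇑y) 2 μ).toReal := by
    intro k
    rw [Lp.norm_def]
    congr 1
    refine eLpNorm_congr_ae ?_
    filter_upwards [Lp.coeFn_sub ((hsL2 k).toLp (s k)) y, (hsL2 k).coeFn_toLp] with x h1 h2
    rw [h1, Pi.sub_apply, h2]
    rfl
  simp only [hnorm]
  have := (ENNReal.tendsto_toReal ENNReal.zero_ne_top).comp hsy
  exact this
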